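/- Let (μ_i)_{i∈I} be a net of Borel probability measures on a uniform space X. Then (μ_i) is a Lévy net if and only if for every bounded uniformly continuous pseudo-metric d on X and every α > 0, the α-observable diameter ObsDiam(X,d,μ_i;−α) converges to 0 along the net. -/

import Mathlib

open Filter Topology MeasureTheory

/-- A net `(μ i)` of Borel probability measures on a uniform space `X` is a Lévy net
if for every family `(B i)` of Borel sets with `liminf μ_i(B_i) > 0` and every open
entourage `U` of `X`, `μ_i(U[B_i]) → 1`. -/
def LevyNet {X ι : Type*} [UniformSpace X] [MeasurableSpace X] (l : Filter ι)
    (μ : ι → Measure X) : Prop :=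
  ∀ B : ι → Set X, (∀ i, MeasurableSet (B i)) →
    0 < l.liminf (fun i => μ i (B i)) →
    ∀ U ∈ uniformity X, IsOpen U →
      Tendsto (fun i => μ i {y | ∃ x ∈ B i, (x, y) ∈ U}) l (𝓝 1)
/-- The `α`-partial diameter of a Borel probability measure `ν` on `ℝ`:
the infimum of diameters of Borel sets of `ν`-measure at least `1 − α`. -/
noncomputable def partDiam (ν : MeasureTheory.Measure ℝ) (α : ℝ) : ENNReal :=
  ⨅ (B : Set ℝ) (_ : MeasurableSet B ∧ 1 - ENNReal.ofReal α ≤ ν B), EMetric.diam B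

/-- Gromov's `α`-observable diameter of `(X, d, μ)`: the supremum of the partial
diameters of the push-forwards of `μ` under (measurable) `1`-Lipschitz functions
`(X, d) → ℝ`. -/
noncomputable def obsDiam {X : Type*} [MeasurableSpace X] (d : X → X → ℝ)
    (μ : MeasureTheory.Measure X) (α : ℝ) : ENNReal :=
  ⨆ (f : X → ℝ) (_ : Measurable f ∧ ∀ x y, |f x - f y| ≤ d x y),
    partDiam (μ.map f) α

open Set Uniformity SetRel in
lemma aux_exists_pseudometric {X : Type*} [u : UniformSpace X] {U : Set (X × X)}
    (hU : U ∈ uniformity X) :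
    ∃ ρ : X → X → ℝ, (∀ x, ρ x x = 0) ∧ (∀ x y, ρ x y = ρ y x) ∧
      (∀ x y z, ρ x z ≤ ρ x y + ρ y z) ∧ (∀ x y, 0 ≤ ρ x y) ∧
      UniformContinuous (fun p : X × X => ρ p.1 p.2) ∧
      ∃ ε : ℝ, 0 < ε ∧ ∀ x y, ρ x y < ε → (x, y) ∈ U := by
  classical
  have step : ∀ s : {s : Set (X × X) // s ∈ 𝓤 X ∧ SetRel.IsSymm s},
      ∃ t : Set (X × X), (t ∈ 𝓤 X ∧ SetRel.IsSymm t) ∧ t ○ t ⊆ s.1 := by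
    rintro ⟨s, hs, -⟩
    rcases comp_symm_mem_uniformity_sets hs with ⟨t, h1, h2, h3⟩
    exact ⟨t, ⟨h1, h2⟩, h3⟩
  let Vs : ℕ → {s : Set (X × X) // s ∈ 𝓤 X ∧ SetRel.IsSymm s} := fun n => Nat.rec
      ⟨SetRel.symmetrize U, symmetrize_mem_uniformity hU, inferInstance⟩
      (fun _ p => ⟨(step p).choose, (step p).choose_spec.1⟩) n
  let V : ℕ → Set (X × X) := fun n => (Vs n).1
  have hVmem : ∀ n, V n ∈ 𝓤 X := fun n => (Vs n).2.1
  have hVsymm : ∀ n, SetRel.IsSymm (V n) := fun n => (Vs n).2.2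
  have hVcomp : ∀ n, V (n + 1) ○ V (n + 1) ⊆ V n := fun n => (step (Vs n)).choose_spec.2
  have hV0 : V 0 ⊆ U := SetRel.symmetrize_subset_self
  have hVsub : ∀ n, V (n + 1) ⊆ V n := fun n p hp =>
    hVcomp n ⟨p.2, hp, refl_mem_uniformity (hVmem (n + 1))⟩
  have hanti : Antitone V := antitone_nat_of_succ_le hVsub
  have hdir : Directed (· ≥ ·) V := fun m n =>
    ⟨max m n, hanti (le_max_left _ _), hanti (le_max_right _ _)⟩
  set F : Filter (X × X) := ⨅ n, 𝓟 (V n) with hF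
  have hbasis : F.HasBasis (fun _ : ℕ => True) V := Filter.hasBasis_iInf_principal hdir
  have hmemF : ∀ n, V n ∈ F := fun n => hbasis.mem_of_mem trivial
  have hFle : 𝓤 X ≤ F := le_iInf fun n => le_principal_iff.2 (hVmem n)
  let core : UniformSpace.Core X := UniformSpace.Core.mk' F
    (by
      intro r hr x
      rcases hbasis.mem_iff.1 hr with ⟨n, -, hn⟩
      exact hn (refl_mem_uniformity (hVmem n)))
    (by
      intro r hr
      rcases hbasis.mem_iff.1 hr with ⟨n, -, hn⟩
      exact mem_of_superset (hmemF n) fun p hp => hn (by haveI := hVsymm n; exact (SetRel.comm (V n)).1 hp))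
    (by
      intro r hr
      rcases hbasis.mem_iff.1 hr with ⟨n, -, hn⟩
      exact ⟨V (n + 1), hmemF (n + 1), (hVcomp n).trans hn⟩)
  let u' : UniformSpace X := UniformSpace.ofCore core
  have huni : 𝓤[u'] = F := rfl
  haveI hcg : (𝓤[u']).IsCountablyGenerated := by rw [huni, hF]; infer_instance
  obtain ⟨m, hm⟩ := @UniformSpace.metrizable_uniformity X u' hcg
  refine ⟨fun x y => @dist X m.toDist x y, fun x => @dist_self X m x,
    fun x y => @dist_comm X m x y, fun x y z => @dist_triangle X m x y z,
    fun x y => @dist_nonneg X m x y, ?_, ?_⟩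
  · have h1 : @UniformContinuous (X × X) ℝ
        (@instUniformSpaceProd X X m.toUniformSpace m.toUniformSpace) _
        (fun p : X × X => @dist X m.toDist p.1 p.2) := @uniformContinuous_dist X m
    rw [hm] at h1
    have hprodle : 𝓤[@instUniformSpaceProd X X u u] ≤ 𝓤[@instUniformSpaceProd X X u' u'] := by
      rw [@uniformity_prod X X u u, @uniformity_prod X X u' u']
      exact inf_le_inf (comap_mono hFle) (comap_mono hFle)
    exact Filter.Tendsto.mono_left h1 hprodle
  · have hV1 : V 1 ∈ 𝓤[m.toUniformSpace] := by rw [hm, huni]; exact hmemF 1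
    rcases (@Metric.mem_uniformity_dist X m _).1 hV1 with ⟨ε, hε, hball⟩
    exact ⟨ε, hε, fun x y h => hV0 (hVsub 0 (hball h))⟩

open Set in
lemma aux_quantile (ν : Measure ℝ) [IsProbabilityMeasure ν] {β : ENNReal}
    (hβ0 : 0 < β) (hβ1 : β < 1) :
    ∃ t : ℝ, β ≤ ν (Set.Iic t) ∧ ν (Set.Iio t) ≤ β := by
  set S : Set ℝ := {t | β ≤ ν (Iic t)} with hS
  have hSne : S.Nonempty := by
    have h1 : Tendsto (fun x => ν (Iic x)) atTop (𝓝 1) := by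
      have := tendsto_measure_Iic_atTop ν
      rwa [measure_univ] at this
    rcases (h1.eventually_const_lt hβ1).exists with ⟨t, ht⟩
    exact ⟨t, ht.le⟩
  have hSbdd : BddBelow S := by
    have hinter : ⋂ n : ℕ, Iic (-(n : ℝ)) = ∅ := by
      ext x
      simp only [mem_iInter, mem_Iic, mem_empty_iff_false, iff_false, not_forall, not_le]
      rcases exists_nat_gt (-x) with ⟨n, hn⟩
      exact ⟨n, by linarith⟩
    have h0 : ⨅ n : ℕ, ν (Iic (-(n : ℝ))) = 0 := by
      rw [← Directed.measure_iInter (fun n => (measurableSet_Iic).nullMeasurableSet)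
        (fun m n => ⟨max m n, fun x hx => le_trans hx (by simp), fun x hx => le_trans hx (by simp)⟩)
        ⟨0, measure_ne_top ν _⟩, hinter, measure_empty]
    have hex : ∃ n : ℕ, ν (Iic (-(n : ℝ))) < β := by
      by_contra h
      push_neg at h
      exact absurd (le_trans (le_iInf h) h0.le) (not_le.2 hβ0)
    rcases hex with ⟨n, hn⟩
    refine ⟨-(n : ℝ), fun s hs => ?_⟩
    by_contra hlt
    push_neg at hlt
    exact absurd (le_trans hs (measure_mono (Iic_subset_Iic.2 hlt.le))) (not_le.2 hn)
  set t : ℝ := sInf S with ht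
  refine ⟨t, ?_, ?_⟩
  · have hIic : ⋂ n : ℕ, Iic (t + ((n : ℝ) + 1)⁻¹) = Iic t := by
      ext x
      simp only [mem_iInter, mem_Iic]
      constructor
      · intro h
        by_contra hx
        push_neg at hx
        rcases exists_nat_one_div_lt (show (0:ℝ) < x - t by linarith) with ⟨n, hn⟩
        rw [one_div] at hn
        have := h n
        linarith
      · intro h n
        have : (0:ℝ) < ((n : ℝ) + 1)⁻¹ := by positivity
        linarith
    have heq : ν (Iic t) = ⨅ n : ℕ, ν (Iic (t + ((n : ℝ) + 1)⁻¹)) := by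
      rw [← hIic]
      refine Directed.measure_iInter (fun n => (measurableSet_Iic).nullMeasurableSet) ?_
        ⟨0, measure_ne_top ν _⟩
      intro m n
      refine ⟨max m n, Iic_subset_Iic.2 ?_, Iic_subset_Iic.2 ?_⟩ <;> gcongr <;> simp
    rw [heq]
    refine le_iInf fun n => ?_
    have hpos : (0:ℝ) < ((n : ℝ) + 1)⁻¹ := by positivity
    rcases Real.lt_sInf_add_pos hSne hpos with ⟨s, hsS, hslt⟩
    exact le_trans hsS (measure_mono (Iic_subset_Iic.2 hslt.le))
  · have hIio : Iio t = ⋃ n : ℕ, Iic (t - ((n : ℝ) + 1)⁻¹) := by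
      ext x
      simp only [mem_iUnion, mem_Iic, mem_Iio]
      constructor
      · intro h
        rcases exists_nat_one_div_lt (show (0:ℝ) < t - x by linarith) with ⟨n, hn⟩
        rw [one_div] at hn
        exact ⟨n, by linarith⟩
      · rintro ⟨n, hn⟩
        have : (0:ℝ) < ((n : ℝ) + 1)⁻¹ := by positivity
        linarith
    have heq : ν (Iio t) = ⨆ n : ℕ, ν (Iic (t - ((n : ℝ) + 1)⁻¹)) := by
      rw [hIio]
      refine Directed.measure_iUnion ?_
      intro m n
      refine ⟨max m n, Iic_subset_Iic.2 ?_, Iic_subset_Iic.2 ?_⟩ <;> gcongr <;> simp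
    rw [heq]
    refine iSup_le fun n => ?_
    have hpos : (0:ℝ) < ((n : ℝ) + 1)⁻¹ := by positivity
    have hnotS : t - ((n : ℝ) + 1)⁻¹ ∉ S := by
      intro hmem
      have := csInf_le hSbdd hmem
      rw [← ht] at this
      linarith
    exact (not_le.1 hnotS).le

open Set in
lemma aux_mem_uniformity {X : Type*} [UniformSpace X] {d : X → X → ℝ}
    (hd0 : ∀ x, d x x = 0)
    (hUC : UniformContinuous (fun p : X × X => d p.1 p.2)) {ε : ℝ} (hε : 0 < ε) :
    {p : X × X | d p.1 p.2 < ε} ∈ uniformity X := by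
  have h := hUC (Metric.dist_mem_uniformity hε)
  rw [uniformity_prod] at h
  rcases Filter.mem_inf_iff.mp h with ⟨t₁, ht₁, t₂, ht₂, heq⟩
  rcases Filter.mem_comap.mp ht₁ with ⟨V₁, hV₁, hsub₁⟩
  rcases Filter.mem_comap.mp ht₂ with ⟨V₂, hV₂, hsub₂⟩
  refine Filter.mem_of_superset hV₂ ?_
  rintro ⟨x, y⟩ hxy
  have hmem : ((x, x), (x, y)) ∈ t₁ ∩ t₂ :=
    ⟨hsub₁ (by simpa using refl_mem_uniformity hV₁), hsub₂ (by simpa using hxy)⟩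
  rw [← heq] at hmem
  have : dist (d x x) (d x y) < ε := hmem
  rw [hd0, Real.dist_eq, zero_sub, abs_neg] at this
  exact lt_of_le_of_lt (le_abs_self _) this

open Set in
/-- A net of Borel probability measures on a uniform space is a Lévy net iff for every
bounded uniformly continuous pseudo-metric `d` and every `α > 0`, the `α`-observable
diameters converge to `0` along the net. -/
theorem stmt15 {X ι : Type*} [UniformSpace X] [MeasurableSpace X] [BorelSpace X]
    (l : Filter ι) [l.NeBot] (μ : ι → Measure X)
    (hprob : ∀ i, IsProbabilityMeasure (μ i)) :
    LevyNet l μ ↔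
      ∀ d : X → X → ℝ, (∀ x, d x x = 0) → (∀ x y, d x y = d y x) →
        (∀ x y z, d x z ≤ d x y + d y z) → (∃ C : ℝ, ∀ x y, d x y ≤ C) →
        UniformContinuous (fun p : X × X => d p.1 p.2) →
        ∀ α : ℝ, 0 < α → Tendsto (fun i => obsDiam d (μ i) α) l (𝓝 0) := by
  constructor
  · intro hlevy
    intro d hd0 hsymm htri _hbdd hUC α hα
    have hdnn : ∀ x y, 0 ≤ d x y := fun x y => by
      have h := htri x y x
      rw [hd0, hsymm y x] at h
      linarith
    rw [ENNReal.tendsto_nhds_zero]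
    intro ε₀ hε₀
    by_contra hcon
    rw [Filter.not_eventually] at hcon
    set δ : ENNReal := min 1 ε₀ with hδdef
    have hδ0 : 0 < δ := lt_min one_pos hε₀
    have hδtop : δ ≠ ⊤ := ne_top_of_le_ne_top ENNReal.one_ne_top (min_le_left _ _)
    set ε : ℝ := δ.toReal / 2 with hεdef
    have hεpos : 0 < ε := by
      have := ENNReal.toReal_pos hδ0.ne' hδtop
      positivity
    have h2ε : ENNReal.ofReal (2 * ε) ≤ ε₀ := by
      rw [hεdef, show 2 * (δ.toReal / 2) = δ.toReal by ring, ENNReal.ofReal_toReal hδtop]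
      exact min_le_right _ _
    set β : ℝ := min (α / 2) 2⁻¹ with hβdef
    have hβpos : (0:ℝ) < β := lt_min (by linarith) (by norm_num)
    set β' : ENNReal := ENNReal.ofReal β with hβ'def
    have hβ'0 : 0 < β' := ENNReal.ofReal_pos.2 hβpos
    have hβ'1 : β' < 1 :=
      ENNReal.ofReal_lt_one.2 (lt_of_le_of_lt (min_le_right _ _) (by norm_num))
    -- choose 1-Lipschitz functions
    have hsel : ∀ i, ∃ f : X → ℝ, (Measurable f ∧ ∀ x y, |f x - f y| ≤ d x y) ∧
        (¬ obsDiam d (μ i) α ≤ ε₀ → ε₀ < partDiam ((μ i).map f) α) := by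
      intro i
      by_cases hi : obsDiam d (μ i) α ≤ ε₀
      · exact ⟨fun _ => 0, ⟨measurable_const, fun x y => by simpa using hdnn x y⟩,
          fun h => absurd hi h⟩
      · rw [not_le] at hi
        unfold obsDiam at hi
        rcases lt_iSup_iff.mp hi with ⟨f, hf⟩
        have hPf : Measurable f ∧ ∀ x y, |f x - f y| ≤ d x y := by
          by_contra h
          rw [iSup_neg h] at hf
          exact absurd hf (by simp)
        rw [iSup_pos hPf] at hf
        exact ⟨f, hPf, fun _ => hf⟩
    choose f hfadm hfbad using hsel
    have hν : ∀ i, IsProbabilityMeasure ((μ i).map (f i)) := fun i =>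
      Measure.isProbabilityMeasure_map (hfadm i).1.aemeasurable
    have hquant : ∀ i, ∃ t : ℝ,
        β' ≤ (μ i).map (f i) (Iic t) ∧ (μ i).map (f i) (Iio t) ≤ β' := fun i =>
      @aux_quantile _ (hν i) _ hβ'0 hβ'1
    choose t ht1 ht2 using hquant
    set U : Set (X × X) := {p | d p.1 p.2 < ε} with hUdef
    have hUmem : U ∈ uniformity X := aux_mem_uniformity hd0 hUC hεpos
    have hUopen : IsOpen U := isOpen_Iio.preimage hUC.continuous
    set B : ι → Set X := fun i => f i ⁻¹' (Iic (t i)) with hBdef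
    set B2 : ι → Set X := fun i => f i ⁻¹' (Ici (t i)) with hB2def
    have hBmeas : ∀ i, MeasurableSet (B i) := fun i => (hfadm i).1 measurableSet_Iic
    have hB2meas : ∀ i, MeasurableSet (B2 i) := fun i => (hfadm i).1 measurableSet_Ici
    have hμB : ∀ i, β' ≤ μ i (B i) := fun i => by
      have h := ht1 i
      rwa [Measure.map_apply (hfadm i).1 measurableSet_Iic] at h
    have hμB2 : ∀ i, 1 - β' ≤ μ i (B2 i) := fun i => by
      haveI := hν i
      have h : (μ i).map (f i) (Ici (t i)) = 1 - (μ i).map (f i) (Iio (t i)) := by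
        rw [← compl_Iio, measure_compl measurableSet_Iio (measure_ne_top _ _), measure_univ]
      rw [Measure.map_apply (hfadm i).1 measurableSet_Ici] at h
      rw [show B2 i = f i ⁻¹' (Ici (t i)) from rfl, h]
      exact tsub_le_tsub_left (ht2 i) 1
    have hL1 := hlevy B hBmeas
      (lt_of_lt_of_le hβ'0 (Filter.le_liminf_of_le (by isBoundedDefault)
        (Filter.Eventually.of_forall hμB))) U hUmem hUopen
    have hL2 := hlevy B2 hB2meas
      (lt_of_lt_of_le (tsub_pos_iff_lt.2 hβ'1) (Filter.le_liminf_of_le (by isBoundedDefault)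
        (Filter.Eventually.of_forall hμB2))) U hUmem hUopen
    have hlt1 : (1:ENNReal) - β' < 1 := ENNReal.sub_lt_self ENNReal.one_ne_top one_ne_zero hβ'0.ne'
    have hE1 : ∀ᶠ i in l, 1 - β' < μ i {y | ∃ x ∈ B i, (x, y) ∈ U} :=
      hL1.eventually_const_lt hlt1
    have hE2 : ∀ᶠ i in l, 1 - β' < μ i {y | ∃ x ∈ B2 i, (x, y) ∈ U} :=
      hL2.eventually_const_lt hlt1
    rcases (hcon.and_eventually (hE1.and hE2)).exists with ⟨i, hbadi, h1i, h2i⟩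
    have hbad := hfbad i hbadi
    haveI := hν i
    have hsub1 : {y | ∃ x ∈ B i, (x, y) ∈ U} ⊆ f i ⁻¹' (Iio (t i + ε)) := by
      rintro y ⟨x, hx, hxy⟩
      have h1 : f i y - f i x ≤ |f i x - f i y| := by
        rw [abs_sub_comm]; exact le_abs_self _
      have h2 := (hfadm i).2 x y
      have hx' : f i x ≤ t i := hx
      have hd' : d x y < ε := hxy
      simp only [mem_preimage, mem_Iio]
      linarith
    have hsub2 : {y | ∃ x ∈ B2 i, (x, y) ∈ U} ⊆ f i ⁻¹' (Ioi (t i - ε)) := by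
      rintro y ⟨x, hx, hxy⟩
      have h1 : f i x - f i y ≤ |f i x - f i y| := le_abs_self _
      have h2 := (hfadm i).2 x y
      have hx' : t i ≤ f i x := hx
      have hd' : d x y < ε := hxy
      simp only [mem_preimage, mem_Ioi]
      linarith
    have hν1 : 1 - β' < (μ i).map (f i) (Iio (t i + ε)) := by
      refine lt_of_lt_of_le h1i ?_
      rw [Measure.map_apply (hfadm i).1 measurableSet_Iio]
      exact measure_mono hsub1
    have hν2 : 1 - β' < (μ i).map (f i) (Ioi (t i - ε)) := by
      refine lt_of_lt_of_le h2i ?_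
      rw [Measure.map_apply (hfadm i).1 measurableSet_Ioi]
      exact measure_mono hsub2
    set ν := (μ i).map (f i) with hνdef
    have hAc : ν (Iio (t i + ε))ᶜ ≤ β' := by
      rw [measure_compl measurableSet_Iio (measure_ne_top _ _), measure_univ]
      exact le_trans (tsub_le_tsub_left hν1.le 1) tsub_tsub_le
    have hBc : ν (Ioi (t i - ε))ᶜ ≤ β' := by
      rw [measure_compl measurableSet_Ioi (measure_ne_top _ _), measure_univ]
      exact le_trans (tsub_le_tsub_left hν2.le 1) tsub_tsub_le
    have hcompl : (Ioo (t i - ε) (t i + ε))ᶜ = (Ioi (t i - ε))ᶜ ∪ (Iio (t i + ε))ᶜ := by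
      rw [← Set.Ioi_inter_Iio, Set.compl_inter]
    have hcc : ν (Ioo (t i - ε) (t i + ε))ᶜ ≤ β' + β' := by
      rw [hcompl]
      exact le_trans (measure_union_le _ _) (add_le_add hBc hAc)
    have h2β : β' + β' ≤ ENNReal.ofReal α := by
      rw [hβ'def, ← ENNReal.ofReal_add hβpos.le hβpos.le]
      refine ENNReal.ofReal_le_ofReal ?_
      have := min_le_left (α / 2) (2⁻¹ : ℝ)
      rw [← hβdef] at this
      linarith
    have hcap : 1 - ENNReal.ofReal α ≤ ν (Ioo (t i - ε) (t i + ε)) := by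
      have h1 : ν (Ioo (t i - ε) (t i + ε)) = 1 - ν (Ioo (t i - ε) (t i + ε))ᶜ := by
        rw [measure_compl measurableSet_Ioo (measure_ne_top _ _), measure_univ,
          ENNReal.sub_sub_cancel ENNReal.one_ne_top prob_le_one]
      rw [h1]
      exact tsub_le_tsub_left (hcc.trans h2β) 1
    have hkey : partDiam ν α ≤ ENNReal.ofReal (2 * ε) := by
      unfold partDiam
      refine iInf_le_of_le (Ioo (t i - ε) (t i + ε))
        (iInf_le_of_le ⟨measurableSet_Ioo, hcap⟩ ?_)
      rw [show EMetric.diam (Ioo (t i - ε) (t i + ε)) = Metric.ediam (Ioo (t i - ε) (t i + ε)) from rfl, Real.ediam_Ioo]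
      exact ENNReal.ofReal_le_ofReal (by linarith)
    exact absurd (hkey.trans h2ε) (not_le.2 hbad)
  · intro hobs
    intro B hBmeas hBpos U hUmem _hUopen
    obtain ⟨ρ, hρ0, hρsymm, hρtri, hρnn, hρUC, ε, hεpos, hερ⟩ := aux_exists_pseudometric hUmem
    set d : X → X → ℝ := fun x y => min (ρ x y) 1 with hddef
    have hd0 : ∀ x, d x x = 0 := fun x => by
      rw [hddef]; simp [hρ0 x]
    have hdsymm : ∀ x y, d x y = d y x := fun x y => by
      rw [hddef]; simp [hρsymm x y]
    have hdnn : ∀ x y, 0 ≤ d x y := fun x y => le_min (hρnn x y) zero_le_one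
    have hdle1 : ∀ x y, d x y ≤ 1 := fun x y => min_le_right _ _
    have hdtri : ∀ x y z, d x z ≤ d x y + d y z := by
      intro x y z
      rcases le_total 1 (ρ x y) with h | h
      · have h1 : d x y = 1 := min_eq_right h
        have := hdle1 x z
        have := hdnn y z
        linarith
      · rcases le_total 1 (ρ y z) with h' | h'
        · have h1 : d y z = 1 := min_eq_right h'
          have := hdle1 x z
          have := hdnn x y
          linarith
        · have h1 : d x y = ρ x y := min_eq_left h
          have h2 : d y z = ρ y z := min_eq_left h'
          have h3 : d x z ≤ ρ x z := min_le_left _ _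
          have := hρtri x y z
          linarith
    have hdUC : UniformContinuous (fun p : X × X => d p.1 p.2) :=
      (LipschitzWith.id.min_const 1).uniformContinuous.comp hρUC
    set ε' : ℝ := min ε 1 with hε'def
    have hε'pos : 0 < ε' := lt_min hεpos one_pos
    have hε'le1 : ε' ≤ 1 := min_le_right _ _
    have hdU : ∀ x y, d x y < ε' → (x, y) ∈ U := by
      intro x y h
      rcases le_or_gt 1 (ρ x y) with h1 | h1
      · rw [hddef] at h
        simp only [min_eq_right h1] at h
        exact absurd h (not_lt.2 hε'le1)
      · have hEq : d x y = ρ x y := min_eq_left h1.le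
        exact hερ x y (lt_of_lt_of_le (hEq ▸ h) (min_le_left ε 1))
    refine tendsto_order.2 ⟨?_, ?_⟩
    swap
    · intro c hc
      refine Filter.Eventually.of_forall (fun i => ?_)
      haveI := hprob i
      exact lt_of_le_of_lt prob_le_one hc
    intro c hc
    obtain ⟨δ, hδ0, hδlt⟩ := exists_between hBpos
    have hevB : ∀ᶠ i in l, δ < μ i (B i) := Filter.eventually_lt_of_lt_liminf hδlt
    have hliminf_le : l.liminf (fun i => μ i (B i)) ≤ 1 := by
      refine Filter.liminf_le_of_frequently_le ?_
      exact (Filter.Eventually.of_forall (fun i => by haveI := hprob i; exact prob_le_one)).frequently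
    have hδ1 : δ < 1 := lt_of_lt_of_le hδlt hliminf_le
    have hδtop : δ ≠ ⊤ := (hδ1.trans ENNReal.one_lt_top).ne
    have hctop : c ≠ ⊤ := (hc.trans ENNReal.one_lt_top).ne
    have h1c0 : (0:ENNReal) < 1 - c := tsub_pos_iff_lt.2 hc
    have h1ctop : (1:ENNReal) - c ≠ ⊤ := ne_top_of_le_ne_top ENNReal.one_ne_top tsub_le_self
    set γ : ℝ := min ((1 - c).toReal / 2) (δ.toReal / 2) with hγdef
    have hγpos : 0 < γ := by
      have h1 := ENNReal.toReal_pos h1c0.ne' h1ctop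
      have h2 := ENNReal.toReal_pos hδ0.ne' hδtop
      refine lt_min (by positivity) (by positivity)
    have hγc : ENNReal.ofReal γ < 1 - c := by
      calc ENNReal.ofReal γ ≤ ENNReal.ofReal ((1 - c).toReal / 2) :=
            ENNReal.ofReal_le_ofReal (min_le_left _ _)
      _ < ENNReal.ofReal ((1 - c).toReal) := by
            rw [ENNReal.ofReal_lt_ofReal_iff (ENNReal.toReal_pos h1c0.ne' h1ctop)]
            have := ENNReal.toReal_pos h1c0.ne' h1ctop
            linarith
      _ = 1 - c := ENNReal.ofReal_toReal h1ctop
    have hγδ : ENNReal.ofReal γ < δ := by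
      calc ENNReal.ofReal γ ≤ ENNReal.ofReal (δ.toReal / 2) :=
            ENNReal.ofReal_le_ofReal (min_le_right _ _)
      _ < ENNReal.ofReal (δ.toReal) := by
            rw [ENNReal.ofReal_lt_ofReal_iff (ENNReal.toReal_pos hδ0.ne' hδtop)]
            have := ENNReal.toReal_pos hδ0.ne' hδtop
            linarith
      _ = δ := ENNReal.ofReal_toReal hδtop
    have hT := hobs d hd0 hdsymm hdtri ⟨1, hdle1⟩ hdUC γ hγpos
    have hev2 : ∀ᶠ i in l, obsDiam d (μ i) γ < ENNReal.ofReal ε' :=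
      hT.eventually_lt_const (ENNReal.ofReal_pos.2 hε'pos)
    filter_upwards [hevB, hev2] with i hiB hiO
    haveI := hprob i
    -- the distance-like function to `B i`
    set F : X → ℝ := fun x => sInf (insert 1 ((fun b => d x b) '' B i)) with hFdef
    have hne : ∀ x, (insert (1:ℝ) ((fun b => d x b) '' B i)).Nonempty :=
      fun x => ⟨1, mem_insert _ _⟩
    have hlb : ∀ x, ∀ r ∈ insert (1:ℝ) ((fun b => d x b) '' B i), 0 ≤ r := by
      rintro x r (rfl | ⟨b, -, rfl⟩)
      · exact zero_le_one
      · exact hdnn x b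
    have hbdd : ∀ x, BddBelow (insert (1:ℝ) ((fun b => d x b) '' B i)) :=
      fun x => ⟨0, hlb x⟩
    have hFnn : ∀ x, 0 ≤ F x := fun x => le_csInf (hne x) (hlb x)
    have hkey : ∀ x y, F x ≤ F y + d x y := by
      intro x y
      refine sub_le_iff_le_add.1 (le_csInf (hne y) ?_)
      rintro r (rfl | ⟨b, hb, rfl⟩)
      · have h1 : F x ≤ 1 := csInf_le (hbdd x) (mem_insert _ _)
        have := hdnn x y
        linarith
      · have h1 : F x ≤ d x b := csInf_le (hbdd x) (mem_insert_of_mem _ ⟨b, hb, rfl⟩)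
        have h2 := hdtri x y b
        linarith
    have hFlip : ∀ x y, |F x - F y| ≤ d x y := by
      intro x y
      rw [abs_sub_le_iff]
      constructor
      · linarith [hkey x y]
      · have := hkey y x
        rw [hdsymm y x] at this
        linarith
    have hFcont : Continuous F := by
      rw [continuous_iff_continuousAt]
      intro x
      have hdx : Tendsto (fun y => d x y) (𝓝 x) (𝓝 0) := by
        have hcd : Continuous fun y => d x y :=
          hdUC.continuous.comp (continuous_const.prodMk continuous_id)
        have h := hcd.tendsto x
        rwa [hd0 x] at h
      have hsq : Tendsto (fun y => dist (F y) (F x)) (𝓝 x) (𝓝 0) := by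
        refine squeeze_zero (fun y => dist_nonneg) (fun y => ?_) hdx
        rw [Real.dist_eq]
        have h := hFlip y x
        rwa [hdsymm y x] at h
      exact tendsto_iff_dist_tendsto_zero.2 hsq
    have hFmeas : Measurable F := hFcont.measurable
    have hF0 : ∀ x ∈ B i, F x = 0 := by
      intro x hx
      refine le_antisymm ?_ (hFnn x)
      have h := csInf_le (hbdd x) (mem_insert_of_mem _ ⟨x, hx, rfl⟩)
      simpa [hd0 x] using h
    set ν : Measure ℝ := (μ i).map F with hνdef
    haveI : IsProbabilityMeasure ν := Measure.isProbabilityMeasure_map hFmeas.aemeasurable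
    have hle : partDiam ν γ ≤ obsDiam d (μ i) γ := by
      unfold obsDiam
      exact le_iSup₂ (f := fun (g : X → ℝ) (_ : Measurable g ∧ ∀ x y, |g x - g y| ≤ d x y) =>
        partDiam ((μ i).map g) γ) F ⟨hFmeas, hFlip⟩
    have hlt : partDiam ν γ < ENNReal.ofReal ε' := lt_of_le_of_lt hle hiO
    unfold partDiam at hlt
    rcases iInf_lt_iff.mp hlt with ⟨S, hS⟩
    rcases iInf_lt_iff.mp hS with ⟨⟨hSmeas, hSν⟩, hSdiam⟩
    have hScompl : ν Sᶜ ≤ ENNReal.ofReal γ := by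
      rw [measure_compl hSmeas (measure_ne_top _ _), measure_univ]
      exact le_trans (tsub_le_tsub_left hSν 1) tsub_tsub_le
    have hν0 : δ < ν {0} := by
      rw [hνdef, Measure.map_apply hFmeas (measurableSet_singleton 0)]
      refine lt_of_lt_of_le hiB (measure_mono ?_)
      intro x hx
      simp [mem_preimage, hF0 x hx]
    have h0S : (0:ℝ) ∈ S := by
      by_contra h0
      have hsub : ({0} : Set ℝ) ⊆ Sᶜ := singleton_subset_iff.2 h0
      exact absurd (le_trans hν0.le (le_trans (measure_mono hsub) hScompl)) (not_le.2 hγδ)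
    have hSsub : F ⁻¹' S ⊆ {y | ∃ x ∈ B i, (x, y) ∈ U} := by
      intro y hy
      have hFy : F y < ε' := by
        have hed : edist (F y) (0:ℝ) < ENNReal.ofReal ε' :=
          lt_of_le_of_lt (EMetric.edist_le_diam_of_mem hy h0S) hSdiam
        rw [edist_lt_ofReal, Real.dist_eq, sub_zero] at hed
        exact lt_of_le_of_lt (le_abs_self _) hed
      rcases exists_lt_of_csInf_lt (hne y) hFy with ⟨r, hr, hrlt⟩
      rcases hr with rfl | ⟨b, hb, rfl⟩
      · exact absurd hrlt (not_lt.2 hε'le1)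
      · refine ⟨b, hb, hdU b y ?_⟩
        rwa [← hdsymm y b]
    have hfin : ν S ≤ μ i {y | ∃ x ∈ B i, (x, y) ∈ U} := by
      rw [hνdef, Measure.map_apply hFmeas hSmeas]
      exact measure_mono hSsub
    have hc2 : c < 1 - ENNReal.ofReal γ := by
      refine (ENNReal.cancel_of_ne ENNReal.ofReal_ne_top).lt_tsub_iff_right.2 ?_
      calc c + ENNReal.ofReal γ < c + (1 - c) := ENNReal.add_lt_add_left hctop hγc
      _ = 1 := add_tsub_cancel_of_le hc.le
    exact lt_of_lt_of_le hc2 (hSν.trans hfin)
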